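/- For every s ∈ (0,1), the function α(s) = ω_q(s)^q/s − 1 is differentiable at s with derivative α′(s) = (1/s)·(−ω_q(s)/((q−1)·(ω_q(s)−1)) − ω_q(s)^q/s). -/

import Mathlib

noncomputable section

open Real Set

/-- `H r z = r·z^(r-1) - (r-1)·z^r`. -/
def H (r z : ℝ) : ℝ := r * z ^ (r - 1) - (r - 1) * z ^ r

/-- `ω` is the inverse of `H r`, mapping `(0,1]` into `[1, r/(r-1))`,
    so that `H r (ω s) = s` for `s ∈ (0,1]`. -/
def IsOmega (r : ℝ) (ω : ℝ → ℝ) : Prop :=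
  ∀ s ∈ Set.Ioc (0 : ℝ) 1, ω s ∈ Set.Ico (1 : ℝ) (r / (r - 1)) ∧ H r (ω s) = s

/-- `τ(s₁,s₂,t) = ((p-q)/p)·(t^p - s₁)/(t^(p-q) - s₁/s₂)`. -/
def tau (p q s₁ s₂ t : ℝ) : ℝ :=
  ((p - q) / p) * ((t ^ p - s₁) / (t ^ (p - q) - s₁ / s₂))

/-- `F(τ)` from the paper, where `ω` plays the role of `ω_q`. -/
def Ffun (p q : ℝ) (ω : ℝ → ℝ) (τ : ℝ) : ℝ :=
  (τ / (1 - ω τ)) * (p - (q * (p - 1) / (q - 1)) * ω τ)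
    - q * (p * ω τ ^ (q - 1) - (p - 1) * ω τ ^ q)

/-- `A(s)` from the paper, where `ω` plays the role of `ω_q`. -/
def Afun (q : ℝ) (ω : ℝ → ℝ) (s : ℝ) : ℝ :=
  s * (ω s / ((q - 1) * (ω s - 1)) + ω s ^ q / s)

lemma hasStrictDerivAt_H (q : ℝ) {z : ℝ} (hz : z ≠ 0) :
    HasStrictDerivAt (H q) (q * (q - 1) * (z ^ (q - 2) - z ^ (q - 1))) z := by
  have h1 := (Real.hasStrictDerivAt_rpow_const_of_ne hz (q - 1)).const_mul q
  have h2 := (Real.hasStrictDerivAt_rpow_const_of_ne hz q).const_mul (q - 1)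
  have h := h1.sub h2
  have hE : q - 1 - 1 = q - 2 := by ring
  rw [hE] at h
  refine h.congr_deriv ?_
  ring

/-- `α(s) = ω_q(s)^q/s − 1` is differentiable on `(0,1)` with
`α′(s) = (1/s)·(−ω_q(s)/((q−1)(ω_q(s)−1)) − ω_q(s)^q/s)`. -/
theorem stmt_16 (p q : ℝ) (hq : 1 < q) (hqp : q < p)
    (ωq : ℝ → ℝ) (hωq : IsOmega q ωq) :
    ∀ s ∈ Set.Ioo (0 : ℝ) 1,
      HasDerivAt (fun u => ωq u ^ q / u - 1)
        ((1 / s) * (-(ωq s / ((q - 1) * (ωq s - 1))) - ωq s ^ q / s)) s := by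
  have hq1 : (0:ℝ) < q - 1 := by linarith
  -- H q is strictly antitone on [1, ∞)
  have hanti : StrictAntiOn (H q) (Ici 1) := by
    apply strictAntiOn_of_deriv_neg (convex_Ici 1)
    · intro x hx
      have hx0 : x ≠ 0 := by have : (1:ℝ) ≤ x := hx; linarith
      exact ((hasStrictDerivAt_H q hx0).hasDerivAt).continuousAt.continuousWithinAt
    · intro x hx
      rw [interior_Ici] at hx
      have hx1 : (1:ℝ) < x := hx
      have hx0 : x ≠ 0 := by linarith
      rw [(hasStrictDerivAt_H q hx0).hasDerivAt.deriv]
      have hb : x ^ (q - 1) = x ^ (q - 2) * x := by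
        rw [show q - 1 = (q - 2) + 1 by ring, Real.rpow_add_one hx0]
      have ha : 0 < x ^ (q - 2) := Real.rpow_pos_of_pos (by linarith) _
      rw [hb]
      nlinarith [mul_pos (mul_pos (mul_pos (show (0:ℝ) < q by linarith) hq1) ha)
        (sub_pos.mpr hx1)]
  intro s hs
  obtain ⟨hs0, hs1⟩ := hs
  obtain ⟨hmem, hHs⟩ := hωq s ⟨hs0, hs1.le⟩
  set z := ωq s with hzdef
  have hz1 : (1:ℝ) ≤ z := hmem.1
  have hzpos : (0:ℝ) < z := by linarith
  have hz0 : z ≠ 0 := ne_of_gt hzpos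
  have hH1 : H q 1 = 1 := by simp [H]
  have hzgt : (1:ℝ) < z := by
    rcases eq_or_lt_of_le hz1 with h | h
    · exfalso
      have : s = 1 := by rw [← hHs, ← h]; exact hH1
      linarith
    · exact h
  -- strict derivative of H q at z, nonzero
  have hHz := hasStrictDerivAt_H q hz0
  set D : ℝ := q * (q - 1) * (z ^ (q - 2) - z ^ (q - 1)) with hDdef
  have hb : z ^ (q - 1) = z ^ (q - 2) * z := by
    rw [show q - 1 = (q - 2) + 1 by ring, Real.rpow_add_one hz0]
  have hc : z ^ q = z ^ (q - 2) * z * z := by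
    have h1 : z ^ ((q - 1) + 1) = z ^ (q - 1) * z := Real.rpow_add_one hz0 (q - 1)
    rw [show (q - 1) + 1 = q by ring] at h1
    rw [h1, hb]
  have ha : 0 < z ^ (q - 2) := Real.rpow_pos_of_pos hzpos _
  have hDneg : D < 0 := by
    rw [hDdef, hb]
    nlinarith [mul_pos (mul_pos (mul_pos (show (0:ℝ) < q by linarith) hq1) ha)
      (sub_pos.mpr hzgt)]
  have hD0 : D ≠ 0 := ne_of_lt hDneg
  -- ωq is eventually a left inverse of H q near z
  have hg : ∀ᶠ x in nhds z, ωq (H q x) = x := by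
    have hcont : ContinuousAt (H q) z := hHz.hasDerivAt.continuousAt
    have hev1 : ∀ᶠ x in nhds z, H q x ∈ Ioo (0:ℝ) 1 := by
      have : Ioo (0:ℝ) 1 ∈ nhds (H q z) := by
        rw [hHs]; exact isOpen_Ioo.mem_nhds ⟨hs0, hs1⟩
      exact hcont this
    have hev2 : ∀ᶠ x in nhds z, 1 < x := eventually_gt_nhds hzgt
    filter_upwards [hev1, hev2] with x hx1 hx2
    obtain ⟨hm, hHx⟩ := hωq (H q x) ⟨hx1.1, hx1.2.le⟩
    exact hanti.injOn hm.1 (le_of_lt hx2) hHx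
  have hωd : HasStrictDerivAt ωq D⁻¹ s := by
    have := hHz.to_local_left_inverse hD0 hg
    rwa [hHs] at this
  -- compute the derivative of u ↦ ωq u ^ q / u - 1
  have hpow : HasDerivAt (fun u => ωq u ^ q) (D⁻¹ * q * z ^ (q - 1)) s :=
    hωd.hasDerivAt.rpow_const (Or.inl hz0)
  have hdiv : HasDerivAt (fun u => ωq u ^ q / u)
      ((D⁻¹ * q * z ^ (q - 1) * s - z ^ q * 1) / s ^ 2) s :=
    hpow.div (hasDerivAt_id s) (ne_of_gt hs0)
  have hfinal := hdiv.sub_const 1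
  refine hfinal.congr_deriv ?_
  rw [hDdef, hb, hc]
  have hzm1 : z - 1 ≠ 0 := by linarith
  have hd : q * (q - 1) * (z ^ (q - 2) - z ^ (q - 2) * z) ≠ 0 := by
    rw [← hb, ← hDdef]; exact hD0
  have hq0 : q ≠ 0 := by positivity
  have hq1' : q - 1 ≠ 0 := ne_of_gt hq1
  have hz1' : 1 - z ≠ 0 := by linarith
  field_simp [hd, hz1']
  ring
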